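/- Let n ≥ 1, m > 0, c_1 ≥ 1, and let q̂_{ij} ∈ (0,1] for all i, j ∈ [n]. Let u, u*, v* ∈ ℝ^n be unit vectors satisfying, for all i, j: (u_i)² ≤ (4n·c_1²/m)·q̂_{ij} and |u_i|·|v*_j| ≤ (16n·c_1/m)·q̂_{ij}. Let (δ_{ij})_{i,j∈[n]} be independent {0,1}-valued random variables with P(δ_{ij}=1) = q̂_{ij}. Define the diagonal matrices B and C by B_{jj} = ∑_i δ_{ij}·u_i²/q̂_{ij} and C_{jj} = ∑_i δ_{ij}·u_i·u*_i/q̂_{ij}. Then for every δ_1 ∈ (0, 3]: P( ‖(⟨u, u*⟩·B − C)·v*‖ > δ_1·√(1 − ⟨u, u*⟩²) ) ≤ 2n·exp(−δ_1²·m/(40n·c_1²)). -/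

import Mathlib

open MeasureTheory ProbabilityTheory



-- exp x ≤ 1 + x + 2x² for x ≤ 3
lemma exp_le_quad_stmt11 {x : ℝ} (hx : x ≤ 3) : Real.exp x ≤ 1 + x + 2*x^2 := by
  rcases le_or_gt x (1/2) with h | h
  · have h1 : (-x) + 1 ≤ Real.exp (-x) := Real.add_one_le_exp _
    have hx1 : 0 < 1 - x := by linarith
    have h2 : Real.exp x * (1 - x) ≤ 1 := by
      have h3 : Real.exp x * ((-x) + 1) ≤ Real.exp x * Real.exp (-x) :=
        mul_le_mul_of_nonneg_left h1 (Real.exp_pos x).le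
      rw [← Real.exp_add] at h3
      simp at h3
      nlinarith
    have h4 : (1:ℝ) ≤ (1 + x + 2*x^2) * (1 - x) := by nlinarith [sq_nonneg x]
    nlinarith [Real.exp_pos x]
  · set t := x/3 with ht
    have ht0 : 0 ≤ t := by simp [ht]; linarith
    have ht1 : t ≤ 1 := by simp [ht]; linarith
    have hb := Real.exp_bound' ht0 ht1 (n := 3) (by norm_num)
    have hb' : Real.exp t ≤ 1 + t + t^2/2 + (2/9)*t^3 := by
      simp [Finset.sum_range_succ, Nat.factorial] at hb
      norm_num at hb
      linarith
    have ht3 : t^3 ≤ t^2 := by nlinarith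
    have hP : Real.exp t ≤ 1 + t + (13/18)*t^2 := by linarith
    have hx3 : x = 3*t := by rw [ht]; ring
    have hexp3 : Real.exp x = (Real.exp t)^3 := by
      rw [hx3, show (3:ℝ)*t = t*3 by ring, ← Real.exp_nat_mul]
      norm_num
      ring_nf
    have h5 : (Real.exp t)^3 ≤ (1 + t + (13/18)*t^2)^3 := by
      apply pow_le_pow_left₀ (Real.exp_pos t).le hP
    have h6 : (1 + t + (13/18)*t^2)^3 ≤ 1 + 3*t + 18*t^2 := by
      have e3 : t^3 ≤ t^2 := by nlinarith
      have e4 : t^4 ≤ t^2 := by nlinarith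
      have e5 : t^5 ≤ t^2 := by nlinarith [pow_le_pow_of_le_one ht0 ht1 (show 2 ≤ 5 by norm_num)]
      have e6 : t^6 ≤ t^2 := by nlinarith [pow_le_pow_of_le_one ht0 ht1 (show 2 ≤ 6 by norm_num)]
      nlinarith [e3, e4, e5, e6]
    rw [hexp3, hx3]
    nlinarith



lemma sinh_convex_stmt11 : ConvexOn ℝ (Set.Ici (0:ℝ)) Real.sinh := by
  apply convexOn_of_deriv2_nonneg (convex_Ici 0) Real.continuous_sinh.continuousOn
  · exact Real.differentiable_sinh.differentiableOn
  · rw [Real.deriv_sinh]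
    exact Real.differentiable_cosh.differentiableOn
  · intro x hx
    rw [interior_Ici, Set.mem_Ioi] at hx
    have : (deriv^[2] Real.sinh) x = Real.sinh x := by
      simp [Function.iterate_succ, Real.deriv_sinh, Real.deriv_cosh]
    rw [this]
    exact Real.sinh_nonneg_iff.2 hx.le

lemma sinh_slope_stmt11 {r1 r2 : ℝ} (h1 : 0 < r1) (h12 : r1 ≤ r2) :
    r2 * Real.sinh r1 ≤ r1 * Real.sinh r2 := by
  have h2 : 0 < r2 := lt_of_lt_of_le h1 h12
  have key := sinh_convex_stmt11.2 (Set.mem_Ici.2 (le_refl (0:ℝ)))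
    (Set.mem_Ici.2 h2.le)
    (show (0:ℝ) ≤ 1 - r1/r2 by rw [sub_nonneg]; exact div_le_one_of_le₀ h12 h2.le)
    (show (0:ℝ) ≤ r1/r2 by positivity) (show (1 - r1/r2) + r1/r2 = 1 by ring)
  simp only [smul_eq_mul, mul_zero, zero_add, Real.sinh_zero] at key
  rw [div_mul_cancel₀ _ h2.ne'] at key
  -- key : sinh r1 ≤ (1 - r1/r2) * 0 + r1/r2 * sinh r2
  have : Real.sinh r1 ≤ r1/r2 * Real.sinh r2 := by linarith
  calc r2 * Real.sinh r1 ≤ r2 * (r1/r2 * Real.sinh r2) := by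
        exact mul_le_mul_of_nonneg_left this h2.le
    _ = r1 * Real.sinh r2 := by field_simp

lemma cosh_sqrt_convex_stmt11 : ConvexOn ℝ (Set.Ici (0:ℝ)) (fun t => Real.cosh (Real.sqrt t)) := by
  have hderiv : ∀ t : ℝ, 0 < t →
      HasDerivAt (fun t => Real.cosh (Real.sqrt t)) (Real.sinh (Real.sqrt t) * (1/(2*Real.sqrt t))) t := by
    intro t ht
    exact (Real.hasDerivAt_sqrt ht.ne').cosh
  apply MonotoneOn.convexOn_of_deriv (convex_Ici 0)
  · exact (Real.continuous_cosh.comp Real.continuous_sqrt).continuousOn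
  · rw [interior_Ici]
    intro t ht
    exact ((hderiv t ht).differentiableAt).differentiableWithinAt
  · rw [interior_Ici]
    intro t1 ht1 t2 ht2 h12
    rw [Set.mem_Ioi] at ht1 ht2
    rw [(hderiv t1 ht1).deriv, (hderiv t2 ht2).deriv]
    have hr1 : 0 < Real.sqrt t1 := Real.sqrt_pos.2 ht1
    have hr2 : 0 < Real.sqrt t2 := Real.sqrt_pos.2 ht2
    have hrr : Real.sqrt t1 ≤ Real.sqrt t2 := Real.sqrt_le_sqrt h12
    have key := sinh_slope_stmt11 hr1 hrr
    rw [mul_one_div, mul_one_div, div_le_div_iff₀ (by positivity) (by positivity)]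
    nlinarith

lemma cosh_sqrt_mul_stmt11 (x y : ℝ) : Real.cosh (Real.sqrt (x^2 + y^2)) ≤ Real.cosh x * Real.cosh y := by
  have key := cosh_sqrt_convex_stmt11.2 (Set.mem_Ici.2 (sq_nonneg (x+y)))
    (Set.mem_Ici.2 (sq_nonneg (x-y)))
    (show (0:ℝ) ≤ 1/2 by norm_num) (show (0:ℝ) ≤ 1/2 by norm_num)
    (show (1:ℝ)/2 + 1/2 = 1 by norm_num)
  simp only [smul_eq_mul] at key
  have e1 : (1:ℝ)/2 * (x+y)^2 + 1/2 * (x-y)^2 = x^2 + y^2 := by ring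
  rw [e1] at key
  rw [Real.sqrt_sq_eq_abs, Real.sqrt_sq_eq_abs, Real.cosh_abs, Real.cosh_abs] at key
  rw [Real.cosh_add, Real.cosh_sub] at key
  calc Real.cosh (Real.sqrt (x^2+y^2)) ≤
      1/2 * (Real.cosh x * Real.cosh y + Real.sinh x * Real.sinh y)
        + 1/2 * (Real.cosh x * Real.cosh y - Real.sinh x * Real.sinh y) := key
    _ = Real.cosh x * Real.cosh y := by ring

lemma cosh_sqrt_sum_stmt11 {ι : Type*} (s : Finset ι) (f : ι → ℝ) :
    Real.cosh (Real.sqrt (∑ j ∈ s, (f j)^2)) ≤ ∏ j ∈ s, Real.cosh (f j) := by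
  induction s using Finset.cons_induction with
  | empty => simp
  | cons a s ha ih =>
    rw [Finset.sum_cons, Finset.prod_cons]
    have hsum : (0:ℝ) ≤ ∑ j ∈ s, (f j)^2 := Finset.sum_nonneg (fun j _ => sq_nonneg _)
    have h1 : Real.cosh (Real.sqrt ((f a)^2 + ∑ j ∈ s, (f j)^2)) ≤
        Real.cosh (f a) * Real.cosh (Real.sqrt (∑ j ∈ s, (f j)^2)) := by
      have := cosh_sqrt_mul_stmt11 (f a) (Real.sqrt (∑ j ∈ s, (f j)^2))
      rwa [Real.sq_sqrt hsum] at this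
    refine h1.trans ?_
    exact mul_le_mul_of_nonneg_left ih (le_trans zero_le_one (Real.one_le_cosh _))


set_option maxHeartbeats 2000000 in
theorem stmt11 {n : ℕ} (hn : 1 ≤ n) (m c1 : ℝ) (hm : 0 < m) (hc1 : 1 ≤ c1)
    (qhat : Fin n → Fin n → ℝ) (hq : ∀ i j, qhat i j ∈ Set.Ioc (0 : ℝ) 1)
    (u ustar vstar : Fin n → ℝ)
    (hu : ∑ i, (u i) ^ 2 = 1) (hustar : ∑ i, (ustar i) ^ 2 = 1)
    (hvstar : ∑ i, (vstar i) ^ 2 = 1)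
    (hub : ∀ i j, (u i) ^ 2 ≤ (4 * n * c1 ^ 2 / m) * qhat i j)
    (huv : ∀ i j, |u i| * |vstar j| ≤ (16 * n * c1 / m) * qhat i j)
    {Ω : Type*} [MeasureSpace Ω] [IsProbabilityMeasure (ℙ : Measure Ω)]
    (X : Fin n × Fin n → Ω → ℝ)
    (hmeas : ∀ p, Measurable (X p))
    (hval : ∀ p ω, X p ω = 0 ∨ X p ω = 1)
    (hind : iIndepFun X ℙ)
    (hX : ∀ p, ℙ {ω | X p ω = 1} = ENNReal.ofReal (qhat p.1 p.2))
    (δ1 : ℝ) (hδ1 : δ1 ∈ Set.Ioc (0 : ℝ) 3) :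
    ℙ {ω | δ1 * Real.sqrt (1 - (∑ i, u i * ustar i) ^ 2) <
        Real.sqrt (∑ j, (((∑ i, u i * ustar i) * (∑ i, X (i, j) ω * (u i) ^ 2 / qhat i j)
          - ∑ i, X (i, j) ω * (u i * ustar i) / qhat i j) * vstar j) ^ 2)} ≤
      ENNReal.ofReal (2 * n * Real.exp (-(δ1 ^ 2 * m) / (40 * n * c1 ^ 2))) := by
  have hδ0 : 0 < δ1 := hδ1.1
  have hδ3 : δ1 ≤ 3 := hδ1.2
  have hn0 : (0:ℝ) < n := by exact_mod_cast Nat.pos_of_ne_zero (by omega)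
  have hn1 : (1:ℝ) ≤ n := by exact_mod_cast hn
  have hc0 : (0:ℝ) < c1 := lt_of_lt_of_le one_pos hc1
  set ρ : ℝ := ∑ i, u i * ustar i with hρdef
  set w : Fin n → ℝ := fun i => ρ * u i - ustar i with hwdef
  have hw : ∑ i, (w i)^2 = 1 - ρ^2 := by
    have e1 : ∀ i, (w i)^2 = ρ^2*(u i)^2 - 2*ρ*(u i * ustar i) + (ustar i)^2 := by
      intro i; simp only [hwdef]; ring
    rw [Finset.sum_congr rfl (fun i _ => e1 i)]
    rw [Finset.sum_add_distrib, Finset.sum_sub_distrib, ← Finset.mul_sum, ← Finset.mul_sum]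
    rw [hu, hustar, ← hρdef]; ring
  have hw0 : 0 ≤ 1 - ρ^2 := hw ▸ Finset.sum_nonneg (fun i _ => sq_nonneg _)
  set b : Fin n × Fin n → ℝ := fun p => u p.1 * w p.1 / qhat p.1 p.2 * vstar p.2 with hbdef
  set entry : Fin n → Ω → ℝ := fun j ω => ∑ i, X (i, j) ω * b (i, j) with hentrydef
  have hentry : ∀ (ω : Ω) (j : Fin n),
      (ρ * (∑ i, X (i, j) ω * (u i) ^ 2 / qhat i j)
          - ∑ i, X (i, j) ω * (u i * ustar i) / qhat i j) * vstar j = entry j ω := by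
    intro ω j
    simp only [hentrydef]
    rw [Finset.mul_sum, ← Finset.sum_sub_distrib, Finset.sum_mul]
    refine Finset.sum_congr rfl (fun i _ => ?_)
    simp only [hbdef, hwdef]
    ring
  -- rewrite the event set
  have hevset : {ω : Ω | δ1 * Real.sqrt (1 - ρ ^ 2) <
        Real.sqrt (∑ j, ((ρ * (∑ i, X (i, j) ω * (u i) ^ 2 / qhat i j)
          - ∑ i, X (i, j) ω * (u i * ustar i) / qhat i j) * vstar j) ^ 2)}
      = {ω : Ω | δ1 * Real.sqrt (1 - ρ^2) < Real.sqrt (∑ j, (entry j ω)^2)} := by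
    ext ω
    simp only [Set.mem_setOf_eq]
    rw [Finset.sum_congr rfl (fun j _ => by rw [hentry ω j])]
  rw [hevset]
  rcases eq_or_lt_of_le hw0 with hzero | hpos
  · -- degenerate case: 1 - ρ² = 0, all w i = 0
    have hwz : ∀ i, w i = 0 := by
      intro i
      have h2 : ∑ i, (w i)^2 = 0 := by rw [hw, ← hzero]
      have := (Finset.sum_eq_zero_iff_of_nonneg (fun i _ => sq_nonneg (w i))).1 h2 i (Finset.mem_univ i)
      exact pow_eq_zero_iff (by norm_num) |>.1 this
    have hbz : ∀ p, b p = 0 := by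
      intro p; simp [hbdef, hwz p.1]
    have : {ω | δ1 * Real.sqrt (1 - ρ^2) < Real.sqrt (∑ j, (entry j ω)^2)} = (∅ : Set Ω) := by
      ext ω
      simp only [Set.mem_setOf_eq, Set.mem_empty_iff_false, iff_false, not_lt]
      have : ∀ j, entry j ω = 0 := by
        intro j; simp only [hentrydef]
        exact Finset.sum_eq_zero (fun i _ => by rw [hbz (i,j), mul_zero])
      have hsum0 : ∑ j, (entry j ω)^2 = 0 :=
        Finset.sum_eq_zero (fun j _ => by rw [this j]; norm_num)
      rw [hsum0, Real.sqrt_zero, ← hzero, Real.sqrt_zero, mul_zero]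
    rw [this]
    simp
  · -- main case: 0 < 1 - ρ²
    set s : ℝ := Real.sqrt (1 - ρ^2) with hsdef
    have hs : 0 < s := Real.sqrt_pos.2 hpos
    have hs2 : s^2 = 1 - ρ^2 := Real.sq_sqrt hw0
    set lam : ℝ := δ1 * m / (16*n*c1^2*s) with hlamdef
    have hlam : 0 < lam := div_pos (by positivity) (by positivity)
    have hq0 : ∀ i j, 0 < qhat i j := fun i j => (hq i j).1
    have hwle : ∀ i, |w i| ≤ s := by
      intro i
      have h1 : (w i)^2 ≤ s^2 := by
        rw [hs2, ← hw]
        exact Finset.single_le_sum (f := fun i => (w i)^2) (fun i _ => sq_nonneg _) (Finset.mem_univ i)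
      calc |w i| = Real.sqrt ((w i)^2) := (Real.sqrt_sq_eq_abs _).symm
        _ ≤ Real.sqrt (s^2) := Real.sqrt_le_sqrt h1
        _ = s := Real.sqrt_sq hs.le
    have hble : ∀ p : Fin n × Fin n, |b p| ≤ (16*n*c1/m) * s := by
      rintro ⟨i,j⟩
      simp only [hbdef]
      have habs : |u i * w i / qhat i j * vstar j| = (|u i| * |vstar j|) * |w i| / qhat i j := by
        rw [abs_mul, abs_div, abs_mul, abs_of_pos (hq0 i j)]; ring
      rw [habs]
      rw [div_le_iff₀ (hq0 i j)]
      calc (|u i| * |vstar j|) * |w i| ≤ ((16*n*c1/m) * qhat i j) * s :=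
            mul_le_mul (huv i j) (hwle i) (abs_nonneg _)
              (by have := hq0 i j; positivity)
        _ = (16*n*c1/m) * s * qhat i j := by ring
    have hlamb : ∀ p, |lam * b p| ≤ 3 := by
      intro p
      rw [abs_mul, abs_of_pos hlam]
      calc lam * |b p| ≤ lam * ((16*n*c1/m)*s) := mul_le_mul_of_nonneg_left (hble p) hlam.le
        _ = δ1 / c1 := by
            rw [hlamdef]
            field_simp
        _ ≤ 3 := by rw [div_le_iff₀ hc0]; nlinarith
    have hqb2 : ∀ p : Fin n × Fin n, qhat p.1 p.2 * (b p)^2 ≤ (4*n*c1^2/m) * ((w p.1)^2 * (vstar p.2)^2) := by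
      rintro ⟨i,j⟩
      simp only [hbdef]
      have e : qhat i j * (u i * w i / qhat i j * vstar j)^2
          = (u i)^2/qhat i j * ((w i)^2 * (vstar j)^2) := by
        have hqq := (hq0 i j).ne'
        field_simp
      rw [e]
      apply mul_le_mul_of_nonneg_right _ (by positivity)
      rw [div_le_iff₀ (hq0 i j)]
      exact hub i j
    have hqb2sum : ∑ p : Fin n × Fin n, qhat p.1 p.2 * (b p)^2 ≤ (4*n*c1^2/m) * (1 - ρ^2) := by
      calc ∑ p : Fin n × Fin n, qhat p.1 p.2 * (b p)^2
          ≤ ∑ p : Fin n × Fin n, (4*n*c1^2/m) * ((w p.1)^2 * (vstar p.2)^2) :=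
            Finset.sum_le_sum (fun p _ => hqb2 p)
        _ = (4*n*c1^2/m) * ((∑ i, (w i)^2) * (∑ j, (vstar j)^2)) := by
            rw [← Finset.mul_sum]
            congr 1
            rw [Finset.sum_mul_sum]
            rw [Fintype.sum_prod_type]
        _ = (4*n*c1^2/m) * (1-ρ^2) := by rw [hw, hvstar, mul_one]
    have hqbmean : ∀ j, ∑ i, qhat i j * b (i,j) = 0 := by
      intro j
      have e : ∀ i, qhat i j * b (i,j) = (u i * w i) * vstar j := by
        intro i; simp only [hbdef]
        have hqq := (hq0 i j).ne'
        field_simp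
      rw [Finset.sum_congr rfl (fun i _ => e i), ← Finset.sum_mul]
      have huw : ∑ i, u i * w i = 0 := by
        have e2 : ∀ i, u i * w i = ρ * (u i)^2 - u i * ustar i := by
          intro i; simp only [hwdef]; ring
        rw [Finset.sum_congr rfl (fun i _ => e2 i), Finset.sum_sub_distrib, ← Finset.mul_sum, hu, ← hρdef]
        ring
      rw [huw, zero_mul]
    -- integrability and mean of the Bernoulli variables
    have hXint : ∀ p, Integrable (X p) ℙ := fun p =>
      (integrable_const (1:ℝ)).mono' (hmeas p).aestronglyMeasurable
        (Filter.Eventually.of_forall (fun ω => by rcases hval p ω with h|h <;> simp [h]))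
    have hXmean : ∀ p, ∫ ω, X p ω ∂ℙ = qhat p.1 p.2 := by
      intro p
      have hms : MeasurableSet {ω | X p ω = 1} := hmeas p (measurableSet_singleton 1)
      have e : X p = Set.indicator {ω | X p ω = 1} (fun _ => (1:ℝ)) := by
        funext ω
        rcases hval p ω with h|h
        · rw [h, Set.indicator_apply, if_neg]
          simp only [Set.mem_setOf_eq, h]
          norm_num
        · rw [h, Set.indicator_apply, if_pos]
          simp only [Set.mem_setOf_eq, h]
      rw [e, integral_indicator_const (1:ℝ) hms, measureReal_def, hX p, smul_eq_mul, mul_one,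
        ENNReal.toReal_ofReal (hq0 p.1 p.2).le]
    have hbern : ∀ (c : ℝ) (p : Fin n × Fin n),
        ∫ ω, Real.exp (c * X p ω) ∂ℙ = 1 + (Real.exp c - 1) * qhat p.1 p.2 := by
      intro c p
      have e : (fun ω => Real.exp (c * X p ω)) = fun ω => 1 + (Real.exp c - 1) * X p ω := by
        funext ω; rcases hval p ω with h|h <;> simp [h]
      rw [e, integral_add (integrable_const 1) ((hXint p).const_mul _), integral_const,
        integral_const_mul, hXmean p]
      simp
    -- per-subset exponential moment bound
    set K : ℝ := 2 * lam^2 * ((4*n*c1^2/m) * (1-ρ^2)) with hKdef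
    have hsubexp : ∀ T : Finset (Fin n),
        ∫ ω, Real.exp (∑ p : Fin n × Fin n, ((if p.2 ∈ T then (1:ℝ) else -1) * (lam * b p)) * X p ω) ∂ℙ
          ≤ Real.exp K := by
      intro T
      set cc : Fin n × Fin n → ℝ := fun p => (if p.2 ∈ T then (1:ℝ) else -1) * (lam * b p) with hccdef
      have hccabs : ∀ p, |cc p| ≤ 3 := by
        intro p
        simp only [hccdef]
        rw [abs_mul]
        have : |if p.2 ∈ T then (1:ℝ) else -1| = 1 := by split_ifs <;> norm_num
        rw [this, one_mul]
        exact hlamb p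
      have hcc2 : ∀ p, (cc p)^2 = lam^2 * (b p)^2 := by
        intro p; simp only [hccdef]; split_ifs <;> ring
      set Y : Fin n × Fin n → Ω → ℝ := fun p ω => cc p * X p ω with hYdef
      have hYmeas : ∀ p, Measurable (Y p) := fun p => (hmeas p).const_mul _
      have hYind : iIndepFun Y ℙ :=
        hind.comp (fun p => fun x : ℝ => cc p * x) (fun p => measurable_id.const_mul _)
      have h1 : mgf (∑ p : Fin n × Fin n, Y p) ℙ 1 = ∏ p : Fin n × Fin n, mgf (Y p) ℙ 1 :=
        hYind.mgf_sum hYmeas Finset.univ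
      have h2 : mgf (∑ p : Fin n × Fin n, Y p) ℙ 1
          = ∫ ω, Real.exp (∑ p : Fin n × Fin n, cc p * X p ω) ∂ℙ := by
        simp only [mgf, one_mul]
        congr 1
        funext ω
        rw [Finset.sum_apply]
      have h3 : ∀ p : Fin n × Fin n, mgf (Y p) ℙ 1 = 1 + (Real.exp (cc p) - 1) * qhat p.1 p.2 := by
        intro p
        simp only [mgf, one_mul, hYdef]
        exact hbern (cc p) p
      have hfac : ∀ p : Fin n × Fin n, 1 + (Real.exp (cc p) - 1) * qhat p.1 p.2
          ≤ Real.exp (qhat p.1 p.2 * cc p + 2*(qhat p.1 p.2 * (cc p)^2)) := by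
        intro p
        have habs := hccabs p
        have h4 : Real.exp (cc p) ≤ 1 + cc p + 2*(cc p)^2 :=
          exp_le_quad_stmt11 (le_trans (le_abs_self _) habs)
        have h5 : (Real.exp (cc p) - 1) * qhat p.1 p.2
            ≤ qhat p.1 p.2 * cc p + 2*(qhat p.1 p.2 * (cc p)^2) := by
          have hq1 := (hq0 p.1 p.2).le
          nlinarith
        calc 1 + (Real.exp (cc p) - 1) * qhat p.1 p.2
            ≤ 1 + (qhat p.1 p.2 * cc p + 2*(qhat p.1 p.2 * (cc p)^2)) := by linarith
          _ ≤ Real.exp (qhat p.1 p.2 * cc p + 2*(qhat p.1 p.2 * (cc p)^2)) := by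
              linarith [Real.add_one_le_exp (qhat p.1 p.2 * cc p + 2*(qhat p.1 p.2 * (cc p)^2))]
      have hfac0 : ∀ p : Fin n × Fin n, 0 ≤ 1 + (Real.exp (cc p) - 1) * qhat p.1 p.2 := by
        intro p
        have h7 : 0 < Real.exp (cc p) * qhat p.1 p.2 := mul_pos (Real.exp_pos _) (hq0 p.1 p.2)
        have hq1 := (hq p.1 p.2).2
        have h8 : 1 + (Real.exp (cc p) - 1) * qhat p.1 p.2
            = (1 - qhat p.1 p.2) + Real.exp (cc p) * qhat p.1 p.2 := by ring
        rw [h8]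
        linarith
      have hsum1 : ∑ p : Fin n × Fin n, qhat p.1 p.2 * cc p = 0 := by
        rw [Fintype.sum_prod_type_right]
        apply Finset.sum_eq_zero
        intro j _
        have e : ∀ i, qhat i j * cc (i, j) = ((if j ∈ T then (1:ℝ) else -1) * lam) * (qhat i j * b (i,j)) := by
          intro i; simp only [hccdef]; ring
        rw [Finset.sum_congr rfl (fun i _ => e i), ← Finset.mul_sum, hqbmean j, mul_zero]
      have hsum2 : ∑ p : Fin n × Fin n, 2*(qhat p.1 p.2 * (cc p)^2) ≤ K := by
        rw [hKdef]
        have e : ∀ p : Fin n × Fin n, 2*(qhat p.1 p.2 * (cc p)^2) = 2*lam^2*(qhat p.1 p.2 * (b p)^2) := by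
          intro p; rw [hcc2 p]; ring
        rw [Finset.sum_congr rfl (fun p _ => e p), ← Finset.mul_sum]
        have h6 : (0:ℝ) ≤ 2*lam^2 := by positivity
        calc 2*lam^2 * (∑ p : Fin n × Fin n, qhat p.1 p.2 * (b p)^2)
            ≤ 2*lam^2 * ((4*n*c1^2/m) * (1-ρ^2)) := mul_le_mul_of_nonneg_left hqb2sum h6
          _ = 2 * lam^2 * ((4*n*c1^2/m) * (1-ρ^2)) := by ring
      calc ∫ ω, Real.exp (∑ p : Fin n × Fin n, cc p * X p ω) ∂ℙ
          = ∏ p : Fin n × Fin n, (1 + (Real.exp (cc p) - 1) * qhat p.1 p.2) := by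
            rw [← h2, h1]; exact Finset.prod_congr rfl (fun p _ => h3 p)
        _ ≤ ∏ p : Fin n × Fin n, Real.exp (qhat p.1 p.2 * cc p + 2*(qhat p.1 p.2 * (cc p)^2)) :=
            Finset.prod_le_prod (fun p _ => hfac0 p) (fun p _ => hfac p)
        _ = Real.exp (∑ p : Fin n × Fin n, (qhat p.1 p.2 * cc p + 2*(qhat p.1 p.2 * (cc p)^2))) :=
            (Real.exp_sum _ _).symm
        _ ≤ Real.exp K := by
            apply Real.exp_le_exp.2
            rw [Finset.sum_add_distrib, hsum1, zero_add]
            exact hsum2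
    -- product of cosh
    set f : Ω → ℝ := fun ω => ∏ j, Real.cosh (lam * entry j ω) with hfdef
    have hentrymeas : ∀ j, Measurable (fun ω => entry j ω) := by
      intro j
      simp only [hentrydef]
      exact Finset.measurable_sum _ (fun i _ => (hmeas (i,j)).mul_const _)
    have hfmeas : Measurable f := by
      simp only [hfdef]
      exact Finset.measurable_prod _ (fun j _ =>
        Real.continuous_cosh.measurable.comp ((hentrymeas j).const_mul _))
    have hf1 : ∀ ω, 1 ≤ f ω := by
      intro ω
      simp only [hfdef]
      have h := Finset.prod_le_prod (s := Finset.univ)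
        (f := fun _ : Fin n => (1:ℝ)) (g := fun j => Real.cosh (lam * entry j ω))
        (fun _ _ => zero_le_one) (fun j _ => Real.one_le_cosh _)
      simpa using h
    have hpoint : ∀ ω, f ω = (∑ T ∈ (Finset.univ : Finset (Fin n)).powerset,
        Real.exp (∑ p : Fin n × Fin n, ((if p.2 ∈ T then (1:ℝ) else -1) * (lam * b p)) * X p ω)) / 2^n := by
      intro ω
      rw [eq_div_iff (by positivity)]
      have e1 : f ω * 2^n = ∏ j : Fin n, (Real.exp (lam * entry j ω) + Real.exp (-(lam * entry j ω))) := by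
        simp only [hfdef]
        have e0 : (2:ℝ)^n = ∏ _j : Fin n, (2:ℝ) := by
          rw [Finset.prod_const, Finset.card_univ, Fintype.card_fin]
        rw [e0, ← Finset.prod_mul_distrib]
        apply Finset.prod_congr rfl
        intro j _
        rw [Real.cosh_eq]
        field_simp
      have e2 : ∏ j : Fin n, (Real.exp (lam * entry j ω) + Real.exp (-(lam * entry j ω)))
          = ∑ T ∈ (Finset.univ : Finset (Fin n)).powerset,
              (∏ j ∈ T, Real.exp (lam * entry j ω)) * ∏ j ∈ Finset.univ \ T, Real.exp (-(lam * entry j ω)) :=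
        Finset.prod_add _ _ _
      have e3 : ∀ T ∈ (Finset.univ : Finset (Fin n)).powerset,
          (∏ j ∈ T, Real.exp (lam * entry j ω)) * ∏ j ∈ Finset.univ \ T, Real.exp (-(lam * entry j ω))
          = Real.exp (∑ p : Fin n × Fin n, ((if p.2 ∈ T then (1:ℝ) else -1) * (lam * b p)) * X p ω) := by
        intro T _
        rw [← Real.exp_sum, ← Real.exp_sum, ← Real.exp_add]
        congr 1
        have hsplit : ∑ p : Fin n × Fin n, ((if p.2 ∈ T then (1:ℝ) else -1) * (lam * b p)) * X p ω
            = ∑ j : Fin n, (if j ∈ T then (1:ℝ) else -1) * (lam * entry j ω) := by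
          rw [Fintype.sum_prod_type_right]
          apply Finset.sum_congr rfl
          intro j _
          simp only [hentrydef]
          rw [Finset.mul_sum, Finset.mul_sum]
          apply Finset.sum_congr rfl
          intro i _
          ring
        rw [hsplit]
        rw [← Finset.sum_filter_add_sum_filter_not Finset.univ (· ∈ T)
          (fun j => (if j ∈ T then (1:ℝ) else -1) * (lam * entry j ω))]
        congr 1
        · rw [show Finset.filter (· ∈ T) Finset.univ = T from by ext j; simp]
          apply Finset.sum_congr rfl
          intro j hj
          rw [if_pos hj, one_mul]
        · rw [show Finset.filter (fun j => ¬ j ∈ T) Finset.univ = Finset.univ \ T from by ext j; simp]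
          apply Finset.sum_congr rfl
          intro j hj
          rw [if_neg (Finset.mem_sdiff.1 hj).2]
          ring
      rw [e1, e2]
      exact Finset.sum_congr rfl e3
    -- integrability
    have hLint : ∀ T : Finset (Fin n), Integrable (fun ω =>
        Real.exp (∑ p : Fin n × Fin n, ((if p.2 ∈ T then (1:ℝ) else -1) * (lam * b p)) * X p ω)) ℙ := by
      intro T
      have hmeasL : Measurable (fun ω =>
          Real.exp (∑ p : Fin n × Fin n, ((if p.2 ∈ T then (1:ℝ) else -1) * (lam * b p)) * X p ω)) :=
        Real.continuous_exp.measurable.comp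
          (Finset.measurable_sum _ (fun p _ => (hmeas p).const_mul _))
      refine (integrable_const (Real.exp (∑ p : Fin n × Fin n, |(if p.2 ∈ T then (1:ℝ) else -1) * (lam * b p)|))).mono'
        hmeasL.aestronglyMeasurable (Filter.Eventually.of_forall (fun ω => ?_))
      rw [Real.norm_eq_abs, abs_of_pos (Real.exp_pos _)]
      apply Real.exp_le_exp.2
      apply Finset.sum_le_sum
      intro p _
      rcases hval p ω with h|h
      · rw [h, mul_zero]; exact abs_nonneg _
      · rw [h, mul_one]; exact le_abs_self _
    have hfint : Integrable f ℙ := by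
      have e : f = fun ω => (∑ T ∈ (Finset.univ : Finset (Fin n)).powerset,
          Real.exp (∑ p : Fin n × Fin n, ((if p.2 ∈ T then (1:ℝ) else -1) * (lam * b p)) * X p ω)) / 2^n :=
        funext hpoint
      rw [e]
      exact (integrable_finset_sum _ (fun T _ => hLint T)).div_const _
    have hfI : ∫ ω, f ω ∂ℙ ≤ Real.exp K := by
      have e : f = fun ω => (∑ T ∈ (Finset.univ : Finset (Fin n)).powerset,
          Real.exp (∑ p : Fin n × Fin n, ((if p.2 ∈ T then (1:ℝ) else -1) * (lam * b p)) * X p ω)) / 2^n :=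
        funext hpoint
      rw [e]
      rw [integral_div]
      rw [integral_finset_sum _ (fun T _ => hLint T)]
      rw [div_le_iff₀ (by positivity : (0:ℝ) < 2^n)]
      calc ∑ T ∈ (Finset.univ : Finset (Fin n)).powerset,
            ∫ ω, Real.exp (∑ p : Fin n × Fin n, ((if p.2 ∈ T then (1:ℝ) else -1) * (lam * b p)) * X p ω) ∂ℙ
          ≤ ∑ T ∈ (Finset.univ : Finset (Fin n)).powerset, Real.exp K :=
            Finset.sum_le_sum (fun T _ => hsubexp T)
        _ = (2^n : ℝ) * Real.exp K := by
            rw [Finset.sum_const, Finset.card_powerset, Finset.card_univ, Fintype.card_fin]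
            simp [nsmul_eq_mul]
        _ = Real.exp K * 2^n := by ring
    -- Markov / Chernoff step
    set c0 : ℝ := Real.cosh (lam * (δ1 * s)) with hc0def
    have hc0pos : 0 < c0 := lt_of_lt_of_le one_pos (Real.one_le_cosh _)
    have hsub2 : {ω | δ1 * s < Real.sqrt (∑ j, (entry j ω)^2)}
        ⊆ {ω | ENNReal.ofReal c0 ≤ ENNReal.ofReal (f ω)} := by
      intro ω hω
      simp only [Set.mem_setOf_eq] at hω ⊢
      apply ENNReal.ofReal_le_ofReal
      have hQ0 : (0:ℝ) ≤ ∑ j, (entry j ω)^2 := Finset.sum_nonneg (fun j _ => sq_nonneg _)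
      have step1 : c0 ≤ Real.cosh (lam * Real.sqrt (∑ j, (entry j ω)^2)) := by
        rw [hc0def, Real.cosh_le_cosh]
        have h1 : 0 ≤ lam * (δ1 * s) := by positivity
        have h2 : 0 ≤ lam * Real.sqrt (∑ j, (entry j ω)^2) := by positivity
        rw [abs_of_nonneg h1, abs_of_nonneg h2]
        exact mul_le_mul_of_nonneg_left hω.le hlam.le
      have step2 : lam * Real.sqrt (∑ j, (entry j ω)^2)
          = Real.sqrt (∑ j, (lam * entry j ω)^2) := by
        have e : ∑ j, (lam * entry j ω)^2 = lam^2 * ∑ j, (entry j ω)^2 := by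
          rw [Finset.mul_sum]
          exact Finset.sum_congr rfl (fun j _ => by ring)
        rw [e, Real.sqrt_mul (sq_nonneg lam), Real.sqrt_sq hlam.le]
      have step3 : Real.cosh (Real.sqrt (∑ j, (lam * entry j ω)^2)) ≤ f ω := by
        simp only [hfdef]
        exact cosh_sqrt_sum_stmt11 Finset.univ _
      calc c0 ≤ Real.cosh (lam * Real.sqrt (∑ j, (entry j ω)^2)) := step1
        _ = Real.cosh (Real.sqrt (∑ j, (lam * entry j ω)^2)) := by rw [step2]
        _ ≤ f ω := step3
    have hmkv : ℙ {ω | δ1 * s < Real.sqrt (∑ j, (entry j ω)^2)}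
        ≤ ENNReal.ofReal (Real.exp K / c0) := by
      have h1 : ℙ {ω | δ1 * s < Real.sqrt (∑ j, (entry j ω)^2)}
          ≤ ℙ {ω | ENNReal.ofReal c0 ≤ ENNReal.ofReal (f ω)} := measure_mono hsub2
      have h2 := mul_meas_ge_le_lintegral₀ (μ := (ℙ : Measure Ω))
        (f := fun ω => ENNReal.ofReal (f ω)) hfmeas.ennreal_ofReal.aemeasurable (ENNReal.ofReal c0)
      have h3 : ∫⁻ ω, ENNReal.ofReal (f ω) ∂ℙ = ENNReal.ofReal (∫ ω, f ω ∂ℙ) :=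
        (ofReal_integral_eq_lintegral_ofReal hfint
          (Filter.Eventually.of_forall (fun ω => le_trans zero_le_one (hf1 ω)))).symm
      have hc0ne : ENNReal.ofReal c0 ≠ 0 := by
        simp only [ne_eq, ENNReal.ofReal_eq_zero, not_le]
        exact hc0pos
      have h4 : ℙ {ω | ENNReal.ofReal c0 ≤ ENNReal.ofReal (f ω)}
          ≤ ENNReal.ofReal (∫ ω, f ω ∂ℙ) / ENNReal.ofReal c0 := by
        rw [ENNReal.le_div_iff_mul_le (Or.inl hc0ne) (Or.inl ENNReal.ofReal_ne_top)]
        rw [mul_comm]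
        rw [← h3]
        exact h2
      refine le_trans h1 (le_trans h4 ?_)
      rw [← ENNReal.ofReal_div_of_pos hc0pos]
      apply ENNReal.ofReal_le_ofReal
      exact (div_le_div_iff_of_pos_right hc0pos).2 hfI
    -- final numeric computation
    refine le_trans hmkv (ENNReal.ofReal_le_ofReal ?_)
    have hsne := hs.ne'
    have hmne := hm.ne'
    have hnne : (n:ℝ) ≠ 0 := hn0.ne'
    have hcne : c1 ≠ 0 := hc0.ne'
    have hK : K = δ1^2*m/(32*n*c1^2) := by
      rw [hKdef, hlamdef, ← hs2]
      field_simp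
      ring
    have hy : lam * (δ1 * s) = δ1^2*m/(16*n*c1^2) := by
      rw [hlamdef]
      field_simp
    have hc0ge : Real.exp (lam * (δ1 * s)) / 2 ≤ c0 := by
      rw [hc0def, Real.cosh_eq]
      have h6 := (Real.exp_pos (-(lam * (δ1*s)))).le
      linarith
    calc Real.exp K / c0 ≤ Real.exp K / (Real.exp (lam * (δ1 * s)) / 2) :=
          div_le_div_of_nonneg_left (Real.exp_pos K).le (by positivity) hc0ge
      _ = 2 * Real.exp (K - lam * (δ1 * s)) := by
          rw [Real.exp_sub]
          field_simp
      _ = 2 * Real.exp (-(δ1^2*m)/(32*n*c1^2)) := by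
          rw [hK, hy]
          congr 1
          ring
      _ ≤ 2*n * Real.exp (-(δ1 ^ 2 * m) / (40 * n * c1 ^ 2)) := by
          apply mul_le_mul
          · linarith
          · apply Real.exp_le_exp.2
            rw [neg_div, neg_div, neg_le_neg_iff]
            apply div_le_div_of_nonneg_left (by positivity) (by positivity)
            nlinarith [sq_nonneg c1]
          · exact (Real.exp_pos _).le
          · positivity
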